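/- Let σ = x(1-x) and σ' = 1-2x. A polynomial f(x) ∈ ℚ[x] lies in the set ℚ[σ]·σ' (polynomials of the form g(σ)·(1-2x) with g ∈ ℚ[X]) if and only if f(x) + f(1-x) = 0 for all x. -/
import Mathlib

open Polynomial

private lemma sigma_comp : (X * (1 - X) : Polynomial ℚ).comp (1 - X) = X * (1 - X) := by
  simp [mul_comp, sub_comp]; ring

private lemma symm_case : ∀ (n : ℕ) (q : Polynomial ℚ), q.natDegree ≤ n →
    q.comp (1 - X) = q → ∃ g : Polynomial ℚ, q = g.comp (X * (1 - X)) := by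
  intro n
  induction n using Nat.strong_induction_on with
  | _ n ih =>
    intro q hdeg hq
    set c : ℚ := q.eval 0 with hc
    by_cases h0 : q - C c = 0
    · exact ⟨C c, by rw [C_comp]; exact sub_eq_zero.mp h0⟩
    · have heval1 : q.eval 1 = c := by
        have := congrArg (fun p => Polynomial.eval (0:ℚ) p) hq
        simpa [eval_comp] using this
      have hr0 : (q - C c).IsRoot 0 := by simp [IsRoot, hc]
      have hr1 : (q - C c).IsRoot 1 := by simp [IsRoot, heval1]
      have hcop : IsCoprime (X - C (0:ℚ)) (X - C (1:ℚ)) :=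
        ⟨1, -1, by simp only [map_zero, map_one]; ring⟩
      have hdvd : (X - C (0:ℚ)) * (X - C (1:ℚ)) ∣ (q - C c) :=
        hcop.mul_dvd (dvd_iff_isRoot.mpr hr0) (dvd_iff_isRoot.mpr hr1)
      obtain ⟨r, hrr⟩ := hdvd
      simp only [map_zero, map_one, sub_zero] at hrr
      have hpr : q - C c = (X * (1 - X)) * (-r) := by
        linear_combination hrr
      have hσ : (X * (1 - X) : Polynomial ℚ) ≠ 0 := by
        intro h
        have := congrArg (fun p => Polynomial.eval (1/2 : ℚ) p) h
        norm_num at this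
      have hrne : (-r : Polynomial ℚ) ≠ 0 := by
        intro h; rw [h, mul_zero] at hpr; exact h0 hpr
      have hsymm : (-r : Polynomial ℚ).comp (1 - X) = -r := by
        have h1 : (q - C c).comp (1 - X) = q - C c := by
          simp [sub_comp, hq]
        rw [hpr, mul_comp, sigma_comp] at h1
        exact mul_left_cancel₀ hσ h1
      have hdegσ : (X * (1 - X) : Polynomial ℚ).natDegree = 2 := by
        have : (X * (1 - X) : Polynomial ℚ) = -X^2 + X + 0 := by ring
        rw [this]; compute_degree!
      have hdp : (q - C c).natDegree = 2 + (-r : Polynomial ℚ).natDegree := by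
        rw [hpr, natDegree_mul hσ hrne, hdegσ]
      have hdq : (q - C c).natDegree ≤ n :=
        le_trans (natDegree_sub_le q (C c)) (by simp [natDegree_C, hdeg])
      have hlt : (-r : Polynomial ℚ).natDegree < n := by omega
      obtain ⟨g, hg⟩ := ih _ hlt (-r) le_rfl hsymm
      refine ⟨X * g + C c, ?_⟩
      rw [add_comp, mul_comp, X_comp, C_comp, ← hg]
      linear_combination hpr

theorem polynomial_in_Q_sigma_sigma'_iff (f : Polynomial ℚ) :
    (∃ g : Polynomial ℚ,
        f = g.comp (Polynomial.X * (1 - Polynomial.X)) * (1 - 2 * Polynomial.X)) ↔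
      ∀ x : ℚ, f.eval x + f.eval (1 - x) = 0 := by
  constructor
  · rintro ⟨g, rfl⟩ x
    simp [eval_comp]
    ring_nf
  · intro h
    have hf : f.comp (1 - X) = -f := by
      apply Polynomial.funext
      intro r
      simp [eval_comp]
      linarith [h r]
    have hroot : f.IsRoot (1/2) := by
      have := h (1/2); norm_num at this
      exact this
    obtain ⟨p, hp⟩ := dvd_iff_isRoot.mpr hroot
    have hC2 : (C (1/2 : ℚ) : Polynomial ℚ) * 2 = 1 := by
      have : ((2:ℚ[X])) = C 2 := (map_ofNat C 2).symm
      rw [this, ← C_mul]; norm_num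
    set q : Polynomial ℚ := C (-(1/2)) * p with hqdef
    have hfq : f = q * (1 - 2 * X) := by
      rw [hp, hqdef]
      have : (C (-(1/2):ℚ) : ℚ[X]) = -C (1/2) := by simp [map_neg]
      rw [this]
      linear_combination (-p * X) * hC2
    have h12 : (1 - 2 * X : Polynomial ℚ) ≠ 0 := by
      intro h'
      have := congrArg (fun p => Polynomial.eval (0:ℚ) p) h'
      norm_num at this
    have hqsymm : q.comp (1 - X) = q := by
      have h1 : f.comp (1 - X) = q.comp (1 - X) * ((1:ℚ[X]) - 2 * (1 - X)) := by
        rw [hfq, mul_comp]; simp [sub_comp, mul_comp]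
      rw [hf, hfq] at h1
      have h2 : -(q * (1 - 2*X)) = q.comp (1 - X) * (-(1 - 2*X)) := by
        rw [h1]; ring
      rw [mul_neg, neg_inj] at h2
      exact (mul_right_cancel₀ h12 h2).symm
    obtain ⟨g, hg⟩ := symm_case q.natDegree q le_rfl hqsymm
    exact ⟨g, by rw [hfq, hg]⟩
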